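/- Let M ∈ ℝ^{m×n}₊ be a nonnegative matrix of rank 2. Then there exist nonnegative matrices V ∈ ℝ^{m×2}₊ and W ∈ ℝ^{2×n}₊ such that M = VW. -/

import Mathlib

open Finset Module Submodule Matrix

set_option synthInstance.maxHeartbeats 1000000 in
/-- Any nonnegative matrix of rank 2 admits an exact nonnegative
factorization of rank 2. -/
theorem stmt_15 (m n : ℕ) (M : Matrix (Fin m) (Fin n) ℝ)
    (hM : ∀ i j, 0 ≤ M i j) (hrank : M.rank = 2) :
    ∃ (V : Matrix (Fin m) (Fin 2) ℝ) (W : Matrix (Fin 2) (Fin n) ℝ),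
      (∀ i k, 0 ≤ V i k) ∧ (∀ k j, 0 ≤ W k j) ∧ M = V * W := by
  classical
  -- columns of M
  set c : Fin n → (Fin m → ℝ) := fun j i => M i j with hc
  have hcdef : ∀ j i, c j i = M i j := fun j i => rfl
  -- the sum functional
  set s : (Fin m → ℝ) →ₗ[ℝ] ℝ := ∑ i : Fin m, LinearMap.proj i with hs
  have hs_apply : ∀ x : Fin m → ℝ, s x = ∑ i, x i := by
    intro x; simp [hs]
  -- column span
  set T : Submodule ℝ (Fin m → ℝ) := Submodule.span ℝ (Set.range c) with hT
  have hrange : Set.range M.col = Set.range c := rfl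
  have hfinT : finrank ℝ ↥T = 2 := by
    rw [Matrix.rank_eq_finrank_span_cols, hrange] at hrank
    exact hrank
  have hcT : ∀ j, c j ∈ T := fun j => Submodule.subset_span (Set.mem_range_self j)
  -- the set of nonzero columns
  set J : Finset (Fin n) := Finset.univ.filter (fun j => c j ≠ 0) with hJ
  have hJmem : ∀ j, j ∈ J ↔ c j ≠ 0 := by intro j; simp [hJ]
  have hJne : J.Nonempty := by
    by_contra h
    have hzero : ∀ j, c j = 0 := by
      intro j
      by_contra hj
      exact h ⟨j, (hJmem j).2 hj⟩
    have : M = 0 := by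
      ext i j
      have := congrFun (hzero j) i
      simpa [hcdef] using this
    rw [this, Matrix.rank_zero] at hrank
    simp at hrank
  -- positivity of sums of nonzero columns
  have spos : ∀ j ∈ J, 0 < s (c j) := by
    intro j hj
    have hnn : ∀ i ∈ Finset.univ, 0 ≤ c j i := fun i _ => hM i j
    have h0 : 0 ≤ s (c j) := by rw [hs_apply]; exact Finset.sum_nonneg hnn
    rcases h0.lt_or_eq with h | h
    · exact h
    · exfalso
      have : ∀ i ∈ Finset.univ, c j i = 0 :=
        (Finset.sum_eq_zero_iff_of_nonneg hnn).1 (by rw [← hs_apply]; exact h.symm)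
      exact (hJmem j).1 hj (funext fun i => this i (Finset.mem_univ i))
  -- normalized columns
  set u : Fin n → (Fin m → ℝ) := fun j => (s (c j))⁻¹ • c j with hu
  have hudef : ∀ j, u j = (s (c j))⁻¹ • c j := fun j => rfl
  have huT : ∀ j, u j ∈ T := fun j => T.smul_mem _ (hcT j)
  have hsu : ∀ j ∈ J, s (u j) = 1 := by
    intro j hj
    rw [hudef j, _root_.map_smul, smul_eq_mul, inv_mul_cancel₀ (spos j hj).ne']
  have hcu : ∀ j ∈ J, c j = s (c j) • u j := by
    intro j hj
    rw [hudef j, smul_smul, mul_inv_cancel₀ (spos j hj).ne', one_smul]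
  obtain ⟨j0, hj0⟩ := hJne
  -- restrict s to T
  set s' : ↥T →ₗ[ℝ] ℝ := s.domRestrict T with hs'
  have hs'def : ∀ x : ↥T, s' x = s ↑x := fun x => rfl
  have hsurj : LinearMap.range s' = ⊤ := by
    rw [LinearMap.range_eq_top]
    intro r
    refine ⟨⟨r • u j0, T.smul_mem _ (huT j0)⟩, ?_⟩
    rw [hs'def, _root_.map_smul, smul_eq_mul]
    rw [hsu j0 hj0, mul_one]
  have hker1 : finrank ℝ ↥(LinearMap.ker s') = 1 := by
    have h := LinearMap.finrank_range_add_finrank_ker s'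
    rw [hsurj, hfinT] at h
    have htop : finrank ℝ (⊤ : Submodule ℝ ℝ) = 1 := by
      rw [finrank_top]; exact finrank_self ℝ
    rw [htop] at h
    omega
  clear_value c s T u s' J
  -- a spanning vector for the kernel
  haveI : Module.Free ℝ ↥(LinearMap.ker s') := Module.Free.of_divisionRing ℝ ↥(LinearMap.ker s')
  obtain ⟨v0, hv0ne, hv0span⟩ := (finrank_eq_one_iff' (K := ℝ) (V := ↥(LinearMap.ker s'))).1 hker1
  set d : Fin m → ℝ := ((v0 : ↥T) : Fin m → ℝ) with hd
  -- parameters along the line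
  have hline : ∀ j : Fin n, ∃ t : ℝ, j ∈ J → u j = u j0 + t • d := by
    intro j
    by_cases hj : j ∈ J
    · have hmemT : u j - u j0 ∈ T := T.sub_mem (huT j) (huT j0)
      have hmemK : (⟨u j - u j0, hmemT⟩ : ↥T) ∈ LinearMap.ker s' := by
        rw [LinearMap.mem_ker, hs'def, map_sub]
        rw [hsu j hj, hsu j0 hj0, sub_self]
      obtain ⟨t, htt⟩ := hv0span ⟨⟨u j - u j0, hmemT⟩, hmemK⟩
      refine ⟨t, fun _ => ?_⟩
      have h2 : t • d = u j - u j0 :=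
        congrArg (fun x : ↥(LinearMap.ker s') => ((x : ↥T) : Fin m → ℝ)) htt
      rw [h2]; abel
    · exact ⟨0, fun h => absurd h hj⟩
  choose t ht using hline
  obtain ⟨p, hp, hpmin⟩ := J.exists_min_image t ⟨j0, hj0⟩
  obtain ⟨q, hq, hqmax⟩ := J.exists_max_image t ⟨j0, hj0⟩
  -- the key decomposition
  have key : ∀ j, ∃ a b : ℝ, 0 ≤ a ∧ 0 ≤ b ∧ c j = a • c p + b • c q := by
    intro j
    by_cases hj : j ∈ J
    · rcases eq_or_lt_of_le (hpmin q hq) with heq | hlt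
      · -- all parameters equal
        have htj : t j = t p := le_antisymm (heq ▸ hqmax j hj) (hpmin j hj)
        have huj : u j = u p := by rw [ht j hj, ht p hp, htj]
        refine ⟨s (c j) * (s (c p))⁻¹, 0, ?_, le_refl 0, ?_⟩
        · exact mul_nonneg (spos j hj).le (inv_nonneg.2 (spos p hp).le)
        · conv_lhs => rw [hcu j hj, huj, hudef p]
          rw [smul_smul, zero_smul, add_zero]
      · -- strict spread: convex combination
        set lam : ℝ := (t q - t j) / (t q - t p) with hlam
        set mu : ℝ := (t j - t p) / (t q - t p) with hmu
        have hden : 0 < t q - t p := sub_pos.2 hlt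
        have hlam0 : 0 ≤ lam := div_nonneg (sub_nonneg.2 (hqmax j hj)) hden.le
        have hmu0 : 0 ≤ mu := div_nonneg (sub_nonneg.2 (hpmin j hj)) hden.le
        have hsum : lam + mu = 1 := by
          rw [hlam, hmu, ← add_div, div_eq_one_iff_eq hden.ne']
          ring
        have hcomb : lam * t p + mu * t q = t j := by
          rw [hlam, hmu]
          field_simp
          ring
        have huj : u j = lam • u p + mu • u q := by
          have e : lam • u p + mu • u q
              = (lam + mu) • u j0 + (lam * t p + mu * t q) • d := by
            rw [ht p hp, ht q hq]
            simp only [smul_add, smul_smul, add_smul]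
            abel
          rw [e, hsum, hcomb, one_smul, ht j hj]
        refine ⟨s (c j) * lam * (s (c p))⁻¹, s (c j) * mu * (s (c q))⁻¹, ?_, ?_, ?_⟩
        · exact mul_nonneg (mul_nonneg (spos j hj).le hlam0) (inv_nonneg.2 (spos p hp).le)
        · exact mul_nonneg (mul_nonneg (spos j hj).le hmu0) (inv_nonneg.2 (spos q hq).le)
        · conv_lhs => rw [hcu j hj, huj, hudef p, hudef q]
          simp only [smul_add, smul_smul]
          congr 1 <;> congr 1 <;> ring
    · refine ⟨0, 0, le_refl 0, le_refl 0, ?_⟩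
      have : c j = 0 := by
        by_contra hne
        exact hj ((hJmem j).2 hne)
      rw [this]; simp
  choose a b ha hb hab using key
  refine ⟨Matrix.of fun i k => if k = 0 then M i p else M i q,
    Matrix.of fun k j => if k = 0 then a j else b j, ?_, ?_, ?_⟩
  · intro i k
    by_cases h : k = 0 <;> simp [h, hM]
  · intro k j
    by_cases h : k = 0 <;> simp [h, ha j, hb j]
  · ext i j
    have hij := congrFun (hab j) i
    simp only [Pi.add_apply, Pi.smul_apply, smul_eq_mul, hcdef] at hij
    rw [Matrix.mul_apply, Fin.sum_univ_two]
    simp only [Matrix.of_apply]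
    norm_num
    rw [hij]
    ring
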